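/- Let λ be a pre-averaging function. There exists a constant C depending only on λ such that for all integers 1 ≤ m ≤ n and all 2 ≤ i ≤ m, |Σ_{j: j/n ∈ ((i−2)/m, i/m]} λ̃(m·j/n − (i−2))| ≤ C. -/
import Mathlib


open MeasureTheory ProbabilityTheory Real

/-- `λ̄ := (2∫₀¹ (∫₀ˢ λ(u) du)² ds)^{1/2}`. -/
noncomputable def lamBar (lam : ℝ → ℝ) : ℝ :=
  Real.sqrt (2 * ∫ s in (0:ℝ)..1, (∫ u in (0:ℝ)..s, lam u) ^ 2)

/-- The normalized pre-averaging function `λ̃ := λ / λ̄`. -/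
noncomputable def lamTilde (lam : ℝ → ℝ) (t : ℝ) : ℝ := lam t / lamBar lam

/-- A pre-averaging function: `λ : [0,2) → ℝ` (extended by `0` outside `[0,2)`)
piecewise Lipschitz, antisymmetric `λ(t) = −λ(2−t)` on `(0,2)`, not identically
zero. -/
def IsPreAveraging (lam : ℝ → ℝ) : Prop :=
  (∀ t : ℝ, t < 0 ∨ 2 ≤ t → lam t = 0) ∧
  (∀ t ∈ Set.Ioo (0:ℝ) 2, lam t = - lam (2 - t)) ∧
  (∃ (N : ℕ) (a : ℕ → ℝ), 0 < N ∧ a 0 = 0 ∧ a N = 2 ∧ (∀ i < N, a i < a (i + 1)) ∧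
    ∀ i < N, ∃ K : NNReal, LipschitzOnWith K lam (Set.Ioo (a i) (a (i + 1)))) ∧
  (∃ t, lam t ≠ 0)

/-- `Λ(s) := (∫ₛ² λ̃(u) du)·1_{[0,2]}(s)`. -/
noncomputable def bigLambda (lam : ℝ → ℝ) (s : ℝ) : ℝ :=
  Set.indicator (Set.Icc (0:ℝ) 2) (fun s' => ∫ u in s'..2, lamTilde lam u) s

/-- `Λ̄(s) := ((∫₀ˢ λ̃)² + (∫₀^{1−s} λ̃)²)^{1/2}·1_{[0,1]}(s)`. -/
noncomputable def bigLambdaBar (lam : ℝ → ℝ) (s : ℝ) : ℝ :=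
  Set.indicator (Set.Icc (0:ℝ) 1)
    (fun s' => Real.sqrt ((∫ u in (0:ℝ)..s', lamTilde lam u) ^ 2 +
      (∫ u in (0:ℝ)..(1 - s'), lamTilde lam u) ^ 2)) s

open Classical in
/-- The indices `j ∈ {0,…,n}` with `j/n ∈ ((i−2)/m, i/m]`. -/
noncomputable def window (n m i : ℕ) : Finset ℕ :=
  (Finset.range (n + 1)).filter
    (fun j => ((i : ℝ) - 2) / m < (j : ℝ) / n ∧ (j : ℝ) / n ≤ (i : ℝ) / m)

/-- The grid norm `|g|_{p,m} := (m⁻¹ Σ_{i=1}^m |g((i−1)/m)|^p)^{1/p}`. -/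
noncomputable def gridNorm (g : ℝ → ℝ) (p : ℝ) (m : ℕ) : ℝ :=
  ((m : ℝ)⁻¹ * ∑ i ∈ Finset.Icc 1 m, |g (((i : ℝ) - 1) / m)| ^ p) ^ (1 / p)

set_option maxHeartbeats 1000000
lemma sum_Ico_shift (f : ℕ → ℝ) (p q : ℕ) (hpq : p ≤ q) :
    ∑ j ∈ Finset.Ico (p+1) (q+1), f j = ∑ j ∈ Finset.Ico p q, f j + f q - f p := by
  have h1 : ∑ j ∈ Finset.Ico p (q+1), f j = (∑ j ∈ Finset.Ico p q, f j) + f q :=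
    Finset.sum_Ico_succ_top hpq f
  have h2 : ∑ j ∈ Finset.Ico p (q+1), f j = f p + ∑ j ∈ Finset.Ico (p+1) (q+1), f j :=
    Finset.sum_eq_sum_Ico_succ_bot (Nat.lt_succ_of_le hpq) f
  linarith

lemma locate (N : ℕ) (a : ℕ → ℝ) (hN : 0 < N) (ha0 : a 0 = 0) (haN : a N = 2)
    (u : ℝ) (hu0 : 0 ≤ u) (hu2 : u < 2) :
    (∃ k ≤ N, a k = u) ∨ (∃ k < N, a k < u ∧ u < a (k+1)) := by
  classical
  set T := (Finset.range (N+1)).filter (fun k => a k ≤ u) with hT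
  have h0T : (0:ℕ) ∈ T := by
    simp only [hT, Finset.mem_filter, Finset.mem_range]
    exact ⟨by omega, by rw [ha0]; exact hu0⟩
  have hTne : T.Nonempty := ⟨0, h0T⟩
  set k := T.max' hTne with hk
  have hkT : k ∈ T := T.max'_mem hTne
  have hkN : k ≤ N := by
    have := Finset.mem_range.1 (Finset.mem_filter.1 hkT).1
    omega
  have hak : a k ≤ u := (Finset.mem_filter.1 hkT).2
  rcases eq_or_lt_of_le hak with heq | hlt
  · exact Or.inl ⟨k, hkN, heq⟩
  · have hkN' : k < N := by
      rcases Nat.lt_or_ge k N with h | h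
      · exact h
      · exfalso
        have hkn : k = N := le_antisymm hkN h
        rw [hkn, haN] at hak
        linarith
    refine Or.inr ⟨k, hkN', hlt, ?_⟩
    by_contra hcon
    push_neg at hcon
    have hmem : k + 1 ∈ T := Finset.mem_filter.2 ⟨Finset.mem_range.2 (by omega), hcon⟩
    have := T.le_max' _ hmem
    omega

lemma window_eq (n m c : ℕ) (hm : 1 ≤ m) (hmn : m ≤ n) (him : c + 2 ≤ m) :
    window n m (c+2) = Finset.Ioc (n*c / m) ((n*c + 2*n) / m) := by
  have hm0 : (0:ℝ) < m := by exact_mod_cast hm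
  have hn0 : (0:ℝ) < n := by have : 1 ≤ n := le_trans hm hmn; exact_mod_cast this
  ext j
  simp only [window, Finset.mem_filter, Finset.mem_range, Finset.mem_Ioc]
  have e1 : ((c + 2 : ℕ) : ℝ) - 2 = (c : ℝ) := by push_cast; ring
  have h1 : (((c + 2 : ℕ) : ℝ) - 2) / m < (j : ℝ) / n ↔ n*c / m < j := by
    rw [e1, div_lt_div_iff₀ hm0 hn0, Nat.div_lt_iff_lt_mul (by omega : 0 < m)]
    constructor
    · intro h
      have : (n*c : ℝ) < j * m := by nlinarith
      exact_mod_cast this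
    · intro h
      have : (n*c : ℝ) < (j:ℝ) * m := by exact_mod_cast h
      nlinarith
  have h2 : (j : ℝ) / n ≤ ((c + 2 : ℕ) : ℝ) / m ↔ j ≤ (n*c + 2*n) / m := by
    rw [div_le_div_iff₀ hn0 hm0, Nat.le_div_iff_mul_le (by omega : 0 < m)]
    constructor
    · intro h
      have : (j : ℝ) * m ≤ (n*c + 2*n : ℕ) := by push_cast; nlinarith
      exact_mod_cast this
    · intro h
      have : (j:ℝ) * m ≤ ((n*c + 2*n : ℕ) : ℝ) := by exact_mod_cast h
      push_cast at this
      nlinarith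
  constructor
  · rintro ⟨-, hb, hc2⟩
    exact ⟨(h1.1 hb), (h2.1 hc2)⟩
  · rintro ⟨hb, hc2⟩
    refine ⟨?_, h1.2 hb, h2.2 hc2⟩
    have hB : (n*c + 2*n) / m ≤ n := by
      have h3 : n*c + 2*n ≤ n * m := by nlinarith
      calc (n*c + 2*n)/m ≤ n*m/m := Nat.div_le_div_right h3
        _ = n := Nat.mul_div_cancel n (by omega)
    omega

lemma natfacts (m n P A B S rA rB rS : ℕ) (hm : 0 < m) (hmn : m ≤ n)
    (eA : m * A + rA = P) (eB : m * B + rB = P + 2*n)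
    (eS : m * S + rS = 2*P + 2*n + m - 1)
    (hrA : rA < m) (hrB : rB < m) (hrS : rS < m) :
    A + B ≤ S ∧ S ≤ A + B + 2 ∧ A ≤ B ∧ B ≤ S ∧
    2*P + 2*n ≤ m * S ∧ m * S < 2*P + 2*n + m ∧
    m * B ≤ m * A + 2*n + m := by
  have hAB : A ≤ B := by
    have h : m * A ≤ m * B := by omega
    exact Nat.le_of_mul_le_mul_left h hm
  have hBS : B ≤ S := by
    have h : m * B ≤ m * S := by omega
    exact Nat.le_of_mul_le_mul_left h hm
  have hSlb : A + B ≤ S := by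
    have h : m * (A + B) ≤ m * S := by rw [Nat.mul_add]; omega
    exact Nat.le_of_mul_le_mul_left h hm
  have hSub : S ≤ A + B + 2 := by
    have h : m * S < m * (A + B + 3) := by
      have he : m * (A + B + 3) = m*A + m*B + 3*m := by ring
      omega
    have := Nat.lt_of_mul_lt_mul_left h
    omega
  exact ⟨hSlb, hSub, hAB, hBS, by omega, by omega, by omega⟩

lemma aux_bound (lam : ℝ → ℝ)
    (hzero : ∀ t : ℝ, t < 0 ∨ 2 ≤ t → lam t = 0)
    (hanti : ∀ t ∈ Set.Ioo (0:ℝ) 2, lam t = - lam (2 - t))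
    (N : ℕ) (a : ℕ → ℝ) (hN : 0 < N) (ha0 : a 0 = 0) (haN : a N = 2)
    (hinc : ∀ k < N, a k < a (k + 1))
    (hlip : ∀ k < N, ∃ K : NNReal, LipschitzOnWith K lam (Set.Ioo (a k) (a (k + 1)))) :
    ∃ C : ℝ, 0 < C ∧ ∀ m n i : ℕ, 1 ≤ m → m ≤ n → 2 ≤ i → i ≤ m →
      |∑ j ∈ window n m i, lam ((m : ℝ) * j / n - ((i : ℝ) - 2))| ≤ C := by
  classical
  -- Lipschitz constants
  set Kf : ℕ → NNReal := fun k => if h : k < N then (hlip k h).choose else 0 with hKfdef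
  have hKfspec : ∀ k, ∀ h : k < N, LipschitzOnWith (Kf k) lam (Set.Ioo (a k) (a (k+1))) := by
    intro k h
    simp only [hKfdef, dif_pos h]
    exact (hlip k h).choose_spec
  set K : ℝ := ∑ k ∈ Finset.range N, (Kf k : ℝ) with hKdef
  have hK0 : 0 ≤ K := Finset.sum_nonneg fun k _ => (Kf k).coe_nonneg
  have hKk : ∀ k < N, (Kf k : ℝ) ≤ K := fun k hk =>
    Finset.single_le_sum (fun j _ => (Kf j).coe_nonneg) (Finset.mem_range.2 hk)
  -- monotonicity of breakpoints
  have amono : ∀ j k : ℕ, j ≤ k → k ≤ N → a j ≤ a k := by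
    intro j k hjk hkN
    induction k with
    | zero =>
      have hj : j = 0 := Nat.le_zero.mp hjk
      rw [hj]
    | succ k ih =>
      rcases Nat.eq_or_lt_of_le hjk with h | h
      · rw [h]
      · have h1 : a j ≤ a k := ih (by omega) (by omega)
        have h2 := hinc k (by omega)
        linarith
  have ha_mem : ∀ k, k ≤ N → 0 ≤ a k ∧ a k ≤ 2 := fun k hk =>
    ⟨ha0 ▸ amono 0 k (Nat.zero_le k) hk, haN ▸ amono k N hk le_rfl⟩
  -- the uniform bound M
  set M : ℝ := 1 + (∑ k ∈ Finset.range (N+1), |lam (a k)|)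
      + ∑ k ∈ Finset.range N, (|lam ((a k + a (k+1))/2)| + (Kf k : ℝ) * 2) with hMdef
  have s1nn : 0 ≤ ∑ k ∈ Finset.range (N+1), |lam (a k)| :=
    Finset.sum_nonneg fun _ _ => abs_nonneg _
  have s2nn : 0 ≤ ∑ k ∈ Finset.range N, (|lam ((a k + a (k+1))/2)| + (Kf k : ℝ) * 2) :=
    Finset.sum_nonneg fun k _ => by positivity
  have hM1 : 1 ≤ M := by simp only [hMdef]; linarith
  have hM : ∀ t, |lam t| ≤ M := by
    intro t
    have s1le : ∀ k, k ≤ N → |lam (a k)| ≤ M := by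
      intro k hk
      have h1 : |lam (a k)| ≤ ∑ k ∈ Finset.range (N+1), |lam (a k)| :=
        Finset.single_le_sum (f := fun j => |lam (a j)|) (fun _ _ => abs_nonneg _)
          (Finset.mem_range.2 (Nat.lt_succ_of_le hk))
      simp only [hMdef]; linarith
    rcases lt_or_ge t 0 with h | h
    · rw [hzero t (Or.inl h)]
      simp only [abs_zero]
      linarith
    rcases le_or_gt 2 t with h2 | h2
    · rw [hzero t (Or.inr h2)]
      simp only [abs_zero]
      linarith
    rcases locate N a hN ha0 haN t h h2 with ⟨k, hkN, hak⟩ | ⟨k, hkN, hl1, hl2⟩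
    · rw [← hak]; exact s1le k hkN
    · have hxm : (a k + a (k+1))/2 ∈ Set.Ioo (a k) (a (k+1)) := by
        have := hinc k hkN
        exact ⟨by linarith, by linarith⟩
      have htm : t ∈ Set.Ioo (a k) (a (k+1)) := ⟨hl1, hl2⟩
      have hd : dist (lam t) (lam ((a k + a (k+1))/2)) ≤ (Kf k : ℝ) * dist t ((a k + a (k+1))/2) :=
        (hKfspec k hkN).dist_le_mul t htm _ hxm
      have hdtx : dist t ((a k + a (k+1))/2) ≤ 2 := by
        have h1 := (ha_mem k (by omega)).1
        have h2' := (ha_mem (k+1) (by omega)).2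
        have h3 := (ha_mem (k+1) (by omega)).1
        have h4 := (ha_mem k (by omega)).2
        rw [Real.dist_eq, abs_le]
        constructor <;> linarith
      have hterm : |lam ((a k + a (k+1))/2)| + (Kf k:ℝ)*2
          ≤ ∑ k ∈ Finset.range N, (|lam ((a k + a (k+1))/2)| + (Kf k : ℝ) * 2) :=
        Finset.single_le_sum (f := fun j => |lam ((a j + a (j+1))/2)| + (Kf j : ℝ) * 2)
          (fun j _ => by positivity) (Finset.mem_range.2 hkN)
      have habs : |lam t| ≤ |lam ((a k + a (k+1))/2)| + dist (lam t) (lam ((a k + a (k+1))/2)) := by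
        rw [Real.dist_eq]
        have := abs_sub_abs_le_abs_sub (lam t) (lam ((a k + a (k+1))/2))
        linarith
      have hKnn : (0:ℝ) ≤ (Kf k : ℝ) := (Kf k).coe_nonneg
      have hfin : |lam t| ≤ |lam ((a k + a (k+1))/2)| + (Kf k : ℝ) * 2 := by nlinarith
      simp only [hMdef]; linarith
  -- the constant
  have hNcast : (1:ℝ) ≤ (N:ℝ) + 1 := by
    have := Nat.cast_nonneg (α := ℝ) N
    linarith
  refine ⟨2*M*((N:ℝ)+1) + 3*K + 2*M, by nlinarith, ?_⟩
  intro m n i hm hmn hi2 him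
  obtain ⟨c, rfl⟩ : ∃ c, i = c + 2 := ⟨i - 2, by omega⟩
  have hn : 1 ≤ n := le_trans hm hmn
  have hm0 : (0:ℝ) < m := by exact_mod_cast hm
  have hn0 : (0:ℝ) < n := by exact_mod_cast hn
  rw [window_eq n m c hm hmn him]
  obtain ⟨A, hAdef⟩ : ∃ x, x = n*c/m := ⟨_, rfl⟩
  obtain ⟨B, hBdef⟩ : ∃ x, x = (n*c + 2*n)/m := ⟨_, rfl⟩
  obtain ⟨S, hSdef⟩ : ∃ x, x = (2*(n*c) + 2*n + m - 1)/m := ⟨_, rfl⟩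
  rw [show n*c/m = A from hAdef.symm, show (n*c + 2*n)/m = B from hBdef.symm]
  obtain ⟨hSlb, hSub, hAB, hBS, hXle, hXub, hmBA⟩ :=
    natfacts m n (n*c) A B S
      ((n*c) % m) ((n*c + 2*n) % m) ((2*(n*c) + 2*n + m - 1) % m)
      (by omega) hmn (by rw [hAdef]; exact Nat.div_add_mod _ _)
      (by rw [hBdef]; exact Nat.div_add_mod _ _) (by rw [hSdef]; exact Nat.div_add_mod _ _)
      (Nat.mod_lt _ (by omega)) (Nat.mod_lt _ (by omega)) (Nat.mod_lt _ (by omega))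
  set f : ℕ → ℝ := fun j => lam ((m : ℝ) * j / n - (c:ℝ)) with hfdef
  set δ : ℝ := ((m:ℝ)*S - (2*(c:ℝ)+2)*n)/n with hδdef
  have hXleR : (2*((n:ℝ)*c) + 2*n) ≤ (m:ℝ)*S := by exact_mod_cast hXle
  have hXubR : (m:ℝ)*S < 2*((n:ℝ)*c) + 2*n + m := by exact_mod_cast hXub
  have hδ0 : 0 ≤ δ := by
    apply div_nonneg _ (le_of_lt hn0)
    nlinarith
  have hδh : δ < (m:ℝ)/n := by
    rw [hδdef, div_lt_div_iff₀ hn0 hn0]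
    nlinarith
  set W := Finset.Ioc A B with hWdef
  -- rewrite the goal sum
  have hgoal : ∑ j ∈ W, lam ((m : ℝ) * j / n - (((c+2:ℕ):ℝ) - 2))
      = ∑ j ∈ W, f j := by
    apply Finset.sum_congr rfl
    intro j _
    simp only [hfdef]
    congr 1
    push_cast
    ring
  rw [hgoal]
  -- bounds on the grid points
  have htj : ∀ j ∈ W, 0 < (m:ℝ)*j/n - (c:ℝ) ∧ (m:ℝ)*j/n - (c:ℝ) ≤ 2 := by
    intro j hj
    rw [hWdef, Finset.mem_Ioc, hAdef, hBdef] at hj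
    have h1 : n*c < j*m := (Nat.div_lt_iff_lt_mul (by omega : 0 < m)).1 hj.1
    have h2 : j*m ≤ n*c + 2*n := (Nat.le_div_iff_mul_le (by omega : 0 < m)).1 hj.2
    have h1R : ((n:ℝ)*c) < (j:ℝ)*m := by exact_mod_cast h1
    have h2R : (j:ℝ)*m ≤ (n:ℝ)*c + 2*n := by exact_mod_cast h2
    constructor
    · rw [sub_pos, lt_div_iff₀ hn0]
      nlinarith
    · rw [sub_le_iff_le_add, div_le_iff₀ hn0]
      nlinarith
  have hjS : ∀ j ∈ W, j ≤ S := by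
    intro j hj
    rw [hWdef, Finset.mem_Ioc] at hj
    omega
  -- the pairing identity
  have hpair_eq : ∀ j : ℕ, j ≤ S →
      (m:ℝ) * ((S - j : ℕ):ℝ) / n - (c:ℝ) = (2 - ((m:ℝ)*j/n - (c:ℝ))) + δ := by
    intro j hj
    rw [Nat.cast_sub hj, hδdef]
    field_simp
    ring
  have hfS : ∀ j ∈ W, f (S - j) = lam ((2 - ((m:ℝ)*j/n - (c:ℝ))) + δ) := by
    intro j hj
    simp only [hfdef]
    rw [hpair_eq j (hjS j hj)]
  -- bad indices: a breakpoint lies in [u_j, u_j + δ]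
  set badP : ℕ → Prop := fun j => ∃ k, k ≤ N ∧
      (2 - ((m:ℝ)*j/n - (c:ℝ))) ≤ a k ∧ a k ≤ (2 - ((m:ℝ)*j/n - (c:ℝ))) + δ with hbaddef
  -- pair bound
  have hpair : ∀ j ∈ W, |f j + f (S - j)| ≤ (if badP j then 2*M else K*((m:ℝ)/n)) := by
    intro j hj
    obtain ⟨ht1, ht2⟩ := htj j hj
    rw [hfS j hj]
    rcases eq_or_lt_of_le ht2 with heq | hlt2
    · -- the grid point is exactly 2
      have hbad : badP j := by
        rw [hbaddef]
        refine ⟨0, Nat.zero_le N, ?_, ?_⟩ <;> rw [ha0] <;> linarith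
      rw [if_pos hbad]
      have hf0 : f j = 0 := by
        simp only [hfdef]
        exact hzero _ (Or.inr heq.ge)
      rw [hf0, zero_add]
      exact le_trans (hM _) (by linarith)
    · have hanti' : f j = - lam (2 - ((m:ℝ)*j/n - (c:ℝ))) := by
        simp only [hfdef]
        exact hanti _ ⟨ht1, hlt2⟩
      by_cases hb : badP j
      · rw [if_pos hb, hanti']
        obtain ⟨hu1, hu2⟩ := abs_le.1 (hM (2 - ((m:ℝ)*j/n - (c:ℝ))))
        obtain ⟨hv1, hv2⟩ := abs_le.1 (hM ((2 - ((m:ℝ)*j/n - (c:ℝ))) + δ))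
        rw [abs_le]
        constructor <;> linarith
      · rw [if_neg hb, hanti']
        simp only [hbaddef] at hb
        push_neg at hb
        set u := 2 - ((m:ℝ)*j/n - (c:ℝ)) with hudef
        have hu0' : 0 < u := by rw [hudef]; linarith
        have hu2' : u < 2 := by rw [hudef]; linarith
        rcases locate N a hN ha0 haN u (le_of_lt hu0') hu2' with ⟨k, hkN, hak⟩ | ⟨k, hkN, hk1, hk2⟩
        · exfalso
          have hcb := hb k hkN (le_of_eq hak.symm)
          rw [hak] at hcb
          linarith
        · have hk3 : u + δ < a (k+1) := by
            by_contra hcon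
            push_neg at hcon
            have := hb (k+1) (by omega) (by linarith)
            linarith
          have hdist : dist (lam (u + δ)) (lam u) ≤ (Kf k : ℝ) * dist (u+δ) u :=
            (hKfspec k hkN).dist_le_mul _ ⟨by linarith, hk3⟩ _ ⟨hk1, by linarith⟩
          have hdd : dist (u+δ) u = δ := by
            rw [Real.dist_eq]
            have e : u + δ - u = δ := by ring
            rw [e, abs_of_nonneg hδ0]
          have e2 : - lam u + lam (u+δ) = lam (u+δ) - lam u := by ring
          rw [e2, ← Real.dist_eq]
          rw [hdd] at hdist
          calc dist (lam (u+δ)) (lam u) ≤ (Kf k:ℝ) * δ := hdist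
            _ ≤ K * ((m:ℝ)/n) := mul_le_mul (hKk k hkN) (le_of_lt hδh) hδ0 hK0
  -- reindexing the second copy of the sum
  have hre : ∑ j ∈ W, f (S - j) = ∑ j ∈ Finset.Ico (S - B) (S - A), f j := by
    apply Finset.sum_nbij' (i := fun j => S - j) (j := fun j => S - j)
    · intro x hx
      rw [hWdef, Finset.mem_Ioc] at hx
      rw [Finset.mem_Ico]
      omega
    · intro x hx
      rw [Finset.mem_Ico] at hx
      rw [hWdef, Finset.mem_Ioc]
      omega
    · intro x hx
      rw [hWdef, Finset.mem_Ioc] at hx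
      omega
    · intro x hx
      rw [Finset.mem_Ico] at hx
      omega
    · intro x _
      rfl
  -- all values are bounded by M
  have hMf : ∀ x : ℕ, |f x| ≤ M := by
    intro x
    simp only [hfdef]
    exact hM _
  -- boundary difference bound
  have hIoc : Finset.Ioc A B = Finset.Ico (A+1) (B+1) := by
    ext x
    simp only [Finset.mem_Ioc, Finset.mem_Ico]
    omega
  have hD : |(∑ j ∈ W, f j) - ∑ j ∈ Finset.Ico (S - B) (S - A), f j| ≤ 2*M := by
    have hSor : S = A + B ∨ S = A + B + 1 ∨ S = A + B + 2 := by omega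
    rcases hSor with hS | hS | hS
    · have e1 : S - B = A := by omega
      have e2 : S - A = B := by omega
      rw [hWdef, hIoc, e1, e2, sum_Ico_shift f A B hAB]
      obtain ⟨p1, p2⟩ := abs_le.1 (hMf A)
      obtain ⟨q1, q2⟩ := abs_le.1 (hMf B)
      rw [abs_le]
      constructor <;> linarith
    · have e1 : S - B = A + 1 := by omega
      have e2 : S - A = B + 1 := by omega
      rw [hWdef, hIoc, e1, e2, sub_self, abs_zero]
      linarith
    · have e1 : S - B = A + 2 := by omega
      have e2 : S - A = B + 2 := by omega
      rw [hWdef, hIoc, e1, e2, sum_Ico_shift f (A+1) (B+1) (by omega)]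
      obtain ⟨p1, p2⟩ := abs_le.1 (hMf (A+1))
      obtain ⟨q1, q2⟩ := abs_le.1 (hMf (B+1))
      rw [abs_le]
      constructor <;> linarith
  -- at most N+1 bad indices
  have hfilter : ((W.filter badP).card : ℝ) ≤ (N:ℝ) + 1 := by
    have hwit : ∀ j ∈ W.filter badP, ∃ k, k ≤ N ∧
        (2 - ((m:ℝ)*j/n - (c:ℝ))) ≤ a k ∧ a k ≤ (2 - ((m:ℝ)*j/n - (c:ℝ))) + δ := by
      intro j hj
      have h := (Finset.mem_filter.1 hj).2
      rw [hbaddef] at h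
      exact h
    choose g hg1 hg2 hg3 using hwit
    set g' : ℕ → ℕ := fun j => if hj : j ∈ W.filter badP then g j hj else 0 with hg'def
    have hmapsto : ∀ j ∈ W.filter badP, g' j ∈ Finset.range (N+1) := by
      intro j hj
      simp only [hg'def, dif_pos hj]
      exact Finset.mem_range.2 (Nat.lt_succ_of_le (hg1 j hj))
    have hinj : Set.InjOn g' (W.filter badP) := by
      intro j1 h1 j2 h2 hgeq
      by_contra hne
      have h1' : j1 ∈ W.filter badP := Finset.mem_coe.1 h1
      have h2' : j2 ∈ W.filter badP := Finset.mem_coe.1 h2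
      rw [hg'def] at hgeq
      simp only [dif_pos h1', dif_pos h2'] at hgeq
      have hga := hg2 j1 h1'
      have hgb := hg3 j1 h1'
      have hgc := hg2 j2 h2'
      have hgd := hg3 j2 h2'
      rw [hgeq] at hga hgb
      have hne' : (j1:ℤ) - (j2:ℤ) ≠ 0 := sub_ne_zero.2 (by exact_mod_cast hne)
      have h1n : (1:ℝ) ≤ |(j1:ℝ) - (j2:ℝ)| := by
        have hz := Int.one_le_abs hne'
        have hz' : ((1:ℤ):ℝ) ≤ ((|(j1:ℤ) - (j2:ℤ)|:ℤ):ℝ) := by exact_mod_cast hz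
        push_cast at hz'
        exact hz'
      have key : |(m:ℝ)/n * ((j2:ℝ) - j1)| ≤ δ := by
        have e12 : (2 - ((m:ℝ)*j1/n - (c:ℝ))) - (2 - ((m:ℝ)*j2/n - (c:ℝ)))
            = (m:ℝ)/n * ((j2:ℝ) - j1) := by
          field_simp
          ring
        rw [← e12, abs_le]
        constructor <;> linarith
      rw [abs_mul, abs_of_pos (div_pos hm0 hn0), abs_sub_comm] at key
      have hmul := mul_le_mul_of_nonneg_left h1n (le_of_lt (div_pos hm0 hn0))
      rw [mul_one] at hmul
      linarith
    have hcard := Finset.card_le_card_of_injOn g' hmapsto hinj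
    rw [Finset.card_range] at hcard
    exact_mod_cast hcard
  -- the good indices contribute at most 3K
  have hcW : ((W.filter (fun j => ¬ badP j)).card : ℝ) * ((m:ℝ)/n) ≤ 3 := by
    have h1 : (W.filter (fun j => ¬ badP j)).card ≤ B - A := by
      have h := Finset.card_filter_le W (fun j => ¬ badP j)
      rw [hWdef, Nat.card_Ioc] at h
      exact h
    have h2 : m * (B - A) ≤ 2*n + m := by
      have he : m * (B - A) + m * A = m * B := by
        rw [← Nat.mul_add]
        congr 1
        omega
      omega
    have h3 : m * (B - A) ≤ 3 * n := by omega
    have h5 : (W.filter (fun j => ¬ badP j)).card * m ≤ 3 * n := by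
      calc (W.filter (fun j => ¬ badP j)).card * m ≤ (B - A) * m :=
            Nat.mul_le_mul_right m h1
        _ = m * (B - A) := Nat.mul_comm _ _
        _ ≤ 3 * n := h3
    have h4 : (((W.filter (fun j => ¬ badP j)).card : ℕ) : ℝ) * (m:ℝ) ≤ 3 * (n:ℝ) := by
      exact_mod_cast h5
    rw [← mul_div_assoc, div_le_iff₀ hn0]
    linarith
  -- pair sum bound
  have hPsum : |∑ j ∈ W, (f j + f (S - j))| ≤ 2*M*((N:ℝ)+1) + 3*K := by
    calc |∑ j ∈ W, (f j + f (S - j))| ≤ ∑ j ∈ W, |f j + f (S - j)| :=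
          Finset.abs_sum_le_sum_abs _ _
      _ ≤ ∑ j ∈ W, (if badP j then 2*M else K*((m:ℝ)/n)) := Finset.sum_le_sum hpair
      _ = (∑ _j ∈ W.filter badP, 2*M) + ∑ _j ∈ W.filter (fun j => ¬ badP j), K*((m:ℝ)/n) :=
          Finset.sum_ite _ _
      _ = ((W.filter badP).card : ℝ) * (2*M)
          + ((W.filter (fun j => ¬ badP j)).card : ℝ) * (K*((m:ℝ)/n)) := by
          rw [Finset.sum_const, Finset.sum_const, nsmul_eq_mul, nsmul_eq_mul]
      _ ≤ 2*M*((N:ℝ)+1) + 3*K := by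
          have t1 : ((W.filter badP).card : ℝ) * (2*M) ≤ ((N:ℝ)+1) * (2*M) :=
            mul_le_mul_of_nonneg_right hfilter (by linarith)
          have t2 : ((W.filter (fun j => ¬ badP j)).card : ℝ) * (K*((m:ℝ)/n)) ≤ 3*K := by
            have e3 : ((W.filter (fun j => ¬ badP j)).card : ℝ) * (K*((m:ℝ)/n))
                = K * (((W.filter (fun j => ¬ badP j)).card : ℝ) * ((m:ℝ)/n)) := by ring
            rw [e3]
            calc K * (((W.filter (fun j => ¬ badP j)).card:ℝ) * ((m:ℝ)/n)) ≤ K * 3 :=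
                  mul_le_mul_of_nonneg_left hcW hK0
              _ = 3*K := by ring
          linarith
  -- assembling
  have hfinal : 2 * (∑ j ∈ W, f j)
      = (∑ j ∈ W, (f j + f (S - j))) + ((∑ j ∈ W, f j) - ∑ j ∈ Finset.Ico (S - B) (S - A), f j) := by
    rw [Finset.sum_add_distrib, hre]
    ring
  have habs2 : |2 * ∑ j ∈ W, f j| ≤ 2*M*((N:ℝ)+1) + 3*K + 2*M := by
    rw [hfinal]
    calc |(∑ j ∈ W, (f j + f (S - j))) + ((∑ j ∈ W, f j) - ∑ j ∈ Finset.Ico (S - B) (S - A), f j)|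
        ≤ |∑ j ∈ W, (f j + f (S - j))| + |(∑ j ∈ W, f j) - ∑ j ∈ Finset.Ico (S - B) (S - A), f j| :=
          abs_add_le _ _
      _ ≤ 2*M*((N:ℝ)+1) + 3*K + 2*M := by linarith
  rw [abs_mul] at habs2
  have habs3 : |(2:ℝ)| = 2 := by norm_num
  rw [habs3] at habs2
  have habs0 : 0 ≤ |∑ j ∈ W, f j| := abs_nonneg _
  linarith

theorem riemann_sum_lamTilde_bound (lam : ℝ → ℝ) (hlam : IsPreAveraging lam) :
    ∃ C : ℝ, 0 < C ∧ ∀ m n i : ℕ, 1 ≤ m → m ≤ n → 2 ≤ i → i ≤ m →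
      |∑ j ∈ window n m i, lamTilde lam ((m : ℝ) * j / n - ((i : ℝ) - 2))|
        ≤ C := by
  obtain ⟨hzero, hanti, ⟨N, a, hN, ha0, haN, hinc, hlip⟩, -⟩ := hlam
  obtain ⟨C', hC', hbound⟩ := aux_bound lam hzero hanti N a hN ha0 haN hinc hlip
  by_cases hL : lamBar lam = 0
  · refine ⟨1, one_pos, ?_⟩
    intro m n i _ _ _ _
    simp [lamTilde, hL]
  · have hL0 : 0 < lamBar lam := lt_of_le_of_ne (Real.sqrt_nonneg _) (Ne.symm hL)
    refine ⟨C' / lamBar lam, div_pos hC' hL0, ?_⟩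
    intro m n i h1 h2 h3 h4
    have hb := hbound m n i h1 h2 h3 h4
    have heq : |∑ j ∈ window n m i, lamTilde lam ((m:ℝ)*j/n - ((i:ℝ)-2))|
        = |∑ j ∈ window n m i, lam ((m:ℝ)*j/n - ((i:ℝ)-2))| / lamBar lam := by
      simp only [lamTilde]
      rw [← Finset.sum_div, abs_div, abs_of_pos hL0]
    rw [heq]
    exact div_le_div_of_nonneg_right hb (le_of_lt hL0) |>.trans_eq rfl
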